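/- If σ is a degree-compatible term order on K[x_1,...,x_n] and F is a finite family of polynomials, then the maximum degree of an element in the reduced Gröbner basis of the ideal (F) with respect to σ is at most d_reg(F). -/

import Mathlib

open MvPolynomial

noncomputable section

/-- The total degree of a monomial exponent vector. -/
def mdeg {n : ℕ} (s : Fin n →₀ ℕ) : ℕ := s.sum fun _ e => e

/-- The top homogeneous component (homogeneous part of largest degree) of a polynomial. -/
def topPart {n : ℕ} {K : Type*} [CommSemiring K] (f : MvPolynomial (Fin n) K) :
    MvPolynomial (Fin n) K :=
  homogeneousComponent f.totalDegree f

/-- `regAt F d` says that the degree-`d` part of the ideal generated by the top homogeneous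
parts of the elements of `F` is all of `K[x₁,…,xₙ]_d`; the degree of regularity of `F` is the
least such `d`. -/
def regAt {n : ℕ} {K : Type*} [Field K] (F : Finset (MvPolynomial (Fin n) K)) (d : ℕ) : Prop :=
  ∀ p : MvPolynomial (Fin n) K, p.IsHomogeneous d →
    p ∈ Ideal.span (topPart '' (F : Set (MvPolynomial (Fin n) K)))

/-- `V F d` : the smallest `K`-linear subspace containing all elements of `F` of total degree
at most `d`, and closed under multiplication by monomials as long as the degree stays `≤ d`. -/
def V {n : ℕ} {K : Type*} [Field K] (F : Finset (MvPolynomial (Fin n) K)) (d : ℕ) :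
    Submodule K (MvPolynomial (Fin n) K) :=
  sInf {W | (∀ f ∈ F, f.totalDegree ≤ d → f ∈ W) ∧
    ∀ (s : Fin n →₀ ℕ), ∀ f ∈ W,
      (monomial s (1 : K) * f).totalDegree ≤ d → monomial s (1 : K) * f ∈ W}

/-- The leading monomial (exponent vector) of `f` with respect to a monomial order. -/
def lm {n : ℕ} {K : Type*} [Field K] (m : MonomialOrder (Fin n))
    (f : MvPolynomial (Fin n) K) : Fin n →₀ ℕ :=
  m.toSyn.symm (f.support.sup fun s => m.toSyn s)

/-- A monomial order is degree-compatible if monomials of smaller degree are smaller. -/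
def DegCompatible {n : ℕ} (m : MonomialOrder (Fin n)) : Prop :=
  ∀ s t : Fin n →₀ ℕ, mdeg s < mdeg t → m.toSyn s < m.toSyn t

/-- `G` is a Gröbner basis of `I` w.r.t. `m` : `G ⊆ I` and the leading monomial of every
nonzero element of `I` is divisible by the leading monomial of some nonzero element of `G`. -/
def IsGrobnerBasis {n : ℕ} {K : Type*} [Field K] (m : MonomialOrder (Fin n))
    (I : Ideal (MvPolynomial (Fin n) K)) (G : Finset (MvPolynomial (Fin n) K)) : Prop :=
  (↑G : Set (MvPolynomial (Fin n) K)) ⊆ ↑I ∧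
    ∀ f ∈ I, f ≠ 0 → ∃ g ∈ G, g ≠ 0 ∧ lm m g ≤ lm m f

/-- `G` is the reduced Gröbner basis: a Gröbner basis, monic, and no monomial occurring in an
element of `G` is divisible by the leading monomial of another element of `G`. -/
def IsReducedGB {n : ℕ} {K : Type*} [Field K] (m : MonomialOrder (Fin n))
    (I : Ideal (MvPolynomial (Fin n) K)) (G : Finset (MvPolynomial (Fin n) K)) : Prop :=
  IsGrobnerBasis m I G ∧ (∀ g ∈ G, coeff (lm m g) g = 1) ∧
    ∀ g ∈ G, ∀ g' ∈ G, g ≠ g' → ∀ s ∈ g.support, ¬ lm m g' ≤ s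

section AuxLemmas

open Finsupp

variable {n : ℕ} {K : Type*} [Field K]

lemma mdeg_eq_degree (s : Fin n →₀ ℕ) : mdeg s = Finsupp.degree s := rfl

lemma mdeg_add (s t : Fin n →₀ ℕ) : mdeg (s + t) = mdeg s + mdeg t := by
  simp only [mdeg_eq_degree, Finsupp.degree_eq_weight_one, map_add]

lemma mdeg_zero : mdeg (0 : Fin n →₀ ℕ) = 0 := by
  simp [mdeg_eq_degree, map_zero]

lemma mdeg_single (i : Fin n) : mdeg (Finsupp.single i 1) = 1 := by
  simp [mdeg, Finsupp.sum_single_index]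

lemma mdeg_mono {s t : Fin n →₀ ℕ} (h : s ≤ t) : mdeg s ≤ mdeg t := by
  obtain ⟨u, rfl⟩ := le_iff_exists_add.mp h
  rw [mdeg_add]; exact le_self_add

variable (m : MonomialOrder (Fin n))

lemma lm_mem_support {f : MvPolynomial (Fin n) K} (hf : f ≠ 0) : lm m f ∈ f.support := by
  obtain ⟨s, hs, hsup⟩ := Finset.exists_mem_eq_sup f.support
    (by simpa [Finset.nonempty_iff_ne_empty, MvPolynomial.support_eq_empty] using hf)
    (fun s => m.toSyn s)
  unfold lm
  rw [hsup, AddEquiv.symm_apply_apply]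
  exact hs

lemma le_toSyn_lm {f : MvPolynomial (Fin n) K} {s : Fin n →₀ ℕ} (hs : s ∈ f.support) :
    m.toSyn s ≤ m.toSyn (lm m f) := by
  unfold lm
  rw [AddEquiv.apply_symm_apply]
  exact Finset.le_sup hs

lemma mdeg_lm (hm : DegCompatible m) {f : MvPolynomial (Fin n) K} (hf : f ≠ 0) :
    mdeg (lm m f) = f.totalDegree := by
  apply le_antisymm
  · exact Finset.le_sup (f := fun s => mdeg s) (lm_mem_support m hf)
  · obtain ⟨s, hs, hsup⟩ := Finset.exists_mem_eq_sup f.support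
      (by simpa [Finset.nonempty_iff_ne_empty, MvPolynomial.support_eq_empty] using hf)
      (fun s => mdeg s)
    show (f.support.sup fun s => mdeg s) ≤ _
    rw [hsup]
    by_contra hlt
    push_neg at hlt
    exact absurd (le_toSyn_lm m hs) (not_le.mpr (hm _ _ hlt))

end AuxLemmas
section AuxLemmas2

variable {n : ℕ} {K : Type*} [Field K]

lemma exists_le_mdeg (k : ℕ) : ∀ s : Fin n →₀ ℕ, k ≤ mdeg s → ∃ t ≤ s, mdeg t = k := by
  induction k with
  | zero => exact fun s _ => ⟨0, zero_le, mdeg_zero⟩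
  | succ k ih =>
    intro s hs
    obtain ⟨t, hts, htk⟩ := ih s (by omega)
    have hne : t ≠ s := by
      rintro rfl; omega
    obtain ⟨i, hi⟩ : ∃ i, t i < s i := by
      by_contra h
      push_neg at h
      exact hne (le_antisymm hts fun i => h i)
    refine ⟨t + Finsupp.single i 1, ?_, by rw [mdeg_add, mdeg_single, htk]⟩
    intro j
    rcases eq_or_ne j i with rfl | hj
    · simpa [Finsupp.single_apply] using hi
    · simpa [Finsupp.single_apply, Ne.symm hj] using hts j

lemma lift_component (F : Finset (MvPolynomial (Fin n) K))
    {p : MvPolynomial (Fin n) K}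
    (hp : p ∈ Ideal.span (topPart '' (F : Set (MvPolynomial (Fin n) K)))) (e : ℕ) :
    ∃ q ∈ Ideal.span (F : Set (MvPolynomial (Fin n) K)),
      q.totalDegree ≤ e ∧ homogeneousComponent e q = homogeneousComponent e p := by
  classical
  revert e
  refine Submodule.span_induction ?_ ?_ ?_ ?_ hp
  · rintro x ⟨f, hf, rfl⟩ e
    simp only [topPart]
    rcases eq_or_ne e f.totalDegree with rfl | hne
    · refine ⟨f, Ideal.subset_span hf, le_rfl, ?_⟩
      rw [homogeneousComponent_of_mem (homogeneousComponent_mem _ _), if_pos rfl]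
    · refine ⟨0, Submodule.zero_mem _, by simp, ?_⟩
      rw [homogeneousComponent_of_mem (homogeneousComponent_mem _ _), if_neg hne, map_zero]
  · exact fun e => ⟨0, Submodule.zero_mem _, by simp, by simp⟩
  · rintro x y hx hy ihx ihy e
    obtain ⟨qx, hqxI, hqxd, hqxc⟩ := ihx e
    obtain ⟨qy, hqyI, hqyd, hqyc⟩ := ihy e
    refine ⟨qx + qy, Submodule.add_mem _ hqxI hqyI,
      (MvPolynomial.totalDegree_add _ _).trans (max_le hqxd hqyd), ?_⟩
    rw [map_add, map_add, hqxc, hqyc]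
  · rintro a x hx ihx e
    choose q hqI hqd hqc using fun e => ihx e
    refine ⟨∑ j ∈ Finset.range (e + 1), homogeneousComponent j a * q (e - j), ?_, ?_, ?_⟩
    · exact Ideal.sum_mem _ fun j _ => Ideal.mul_mem_left _ _ (hqI (e - j))
    · refine (MvPolynomial.totalDegree_finset_sum _ _).trans (Finset.sup_le fun j hj => ?_)
      have hj' : j ≤ e := by simpa using Nat.lt_succ_iff.mp (Finset.mem_range.mp hj)
      refine (MvPolynomial.totalDegree_mul _ _).trans ?_
      have h1 : (homogeneousComponent j a).totalDegree ≤ j :=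
        (homogeneousComponent_isHomogeneous j a).totalDegree_le
      have h2 := hqd (e - j)
      omega
    · ext s
      rw [MvPolynomial.coeff_homogeneousComponent, MvPolynomial.coeff_homogeneousComponent]
      split_ifs with hs
      · rw [smul_eq_mul, MvPolynomial.coeff_sum]
        rw [MvPolynomial.coeff_mul]
        have lhs : ∀ j ∈ Finset.range (e + 1),
            MvPolynomial.coeff s (homogeneousComponent j a * q (e - j)) =
            ∑ uv ∈ Finset.HasAntidiagonal.antidiagonal s,
              MvPolynomial.coeff uv.1 (homogeneousComponent j a) *
                MvPolynomial.coeff uv.2 (q (e - j)) := fun j _ => MvPolynomial.coeff_mul _ _ _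
        rw [Finset.sum_congr rfl lhs, Finset.sum_comm]
        refine Finset.sum_congr rfl fun uv huv => ?_
        have hsum : uv.1 + uv.2 = s := Finset.HasAntidiagonal.mem_antidiagonal.mp huv
        have hdeg : Finsupp.degree uv.1 + Finsupp.degree uv.2 = e := by
          rw [← mdeg_eq_degree, ← mdeg_eq_degree, ← mdeg_add, hsum, mdeg_eq_degree, hs]
        rw [Finset.sum_eq_single (Finsupp.degree uv.1)]
        · rw [MvPolynomial.coeff_homogeneousComponent, if_pos rfl]
          congr 1
          have h2 : Finsupp.degree uv.2 = e - Finsupp.degree uv.1 := by omega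
          have := congrArg (MvPolynomial.coeff uv.2) (hqc (e - Finsupp.degree uv.1))
          rwa [MvPolynomial.coeff_homogeneousComponent, MvPolynomial.coeff_homogeneousComponent,
            if_pos h2, if_pos h2] at this
        · intro j _ hj
          rw [MvPolynomial.coeff_homogeneousComponent, if_neg (Ne.symm hj), zero_mul]
        · intro h
          exact absurd (Finset.mem_range.mpr (by omega)) h
      · rfl

end AuxLemmas2
section AuxLemmas3

variable {n : ℕ} {K : Type*} [Field K] (m : MonomialOrder (Fin n))

lemma exists_lm_eq (hm : DegCompatible m) (F : Finset (MvPolynomial (Fin n) K)) {d : ℕ}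
    (hF : regAt F d) {μ : Fin n →₀ ℕ} (hμ : d ≤ mdeg μ) :
    ∃ q ∈ Ideal.span (F : Set (MvPolynomial (Fin n) K)), q ≠ 0 ∧ lm m q = μ := by
  obtain ⟨t, htμ, htd⟩ := exists_le_mdeg d μ hμ
  have hmono : (monomial μ (1 : K)) ∈ Ideal.span (topPart '' (F : Set (MvPolynomial (Fin n) K))) := by
    have hsplit : (μ - t) + t = μ := tsub_add_cancel_of_le htμ
    have : monomial μ (1 : K) = monomial (μ - t) 1 * monomial t 1 := by
      rw [monomial_mul, hsplit, one_mul]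
    rw [this]
    exact Ideal.mul_mem_left _ _ (hF _ (isHomogeneous_monomial _ (htd ▸ (mdeg_eq_degree t).symm)))
  obtain ⟨q, hqI, hqd, hqc⟩ := lift_component F hmono (mdeg μ)
  have hhom : (monomial μ (1 : K)).IsHomogeneous (mdeg μ) :=
    isHomogeneous_monomial _ (mdeg_eq_degree μ).symm
  have hcp : homogeneousComponent (mdeg μ) (monomial μ (1 : K)) = monomial μ 1 := by
    rw [homogeneousComponent_of_mem hhom, if_pos rfl]
  rw [hcp] at hqc
  have hmne : (monomial μ (1 : K)) ≠ 0 := by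
    simp [MvPolynomial.monomial_eq_zero]
  have hq0 : q ≠ 0 := by
    rintro rfl
    rw [map_zero] at hqc
    exact hmne hqc.symm
  refine ⟨q, hqI, hq0, ?_⟩
  have h2 : MvPolynomial.coeff (lm m q) q ≠ 0 := by
    simpa [MvPolynomial.mem_support_iff] using lm_mem_support m hq0
  have hdeg : q.totalDegree = mdeg μ := by
    refine le_antisymm hqd ?_
    by_contra h
    push_neg at h
    rw [homogeneousComponent_eq_zero _ q h] at hqc
    exact hmne hqc.symm
  have h1 : Finsupp.degree (lm m q) = mdeg μ := by
    rw [← mdeg_eq_degree, mdeg_lm m hm hq0, hdeg]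
  have := congrArg (MvPolynomial.coeff (lm m q)) hqc
  rw [MvPolynomial.coeff_homogeneousComponent, if_pos h1, MvPolynomial.coeff_monomial] at this
  by_contra hne
  rw [if_neg (fun h => hne h.symm)] at this
  exact h2 this

end AuxLemmas3

/-- Remark 2.3: for a degree-compatible term order, the maximal degree of an element of the
reduced Gröbner basis of `(F)` is at most the degree of regularity of `F`. -/
theorem stmt5 {n : ℕ} {K : Type*} [Field K] (m : MonomialOrder (Fin n)) (hm : DegCompatible m)
    (F : Finset (MvPolynomial (Fin n) K)) (d : ℕ)
    (hreg : IsLeast {e | regAt F e} d)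
    (G : Finset (MvPolynomial (Fin n) K))
    (hG : IsReducedGB m (Ideal.span (F : Set (MvPolynomial (Fin n) K))) G) :
    ∀ g ∈ G, g.totalDegree ≤ d := by
  intro g hg
  by_contra hlt
  push_neg at hlt
  obtain ⟨⟨hGI, hGB⟩, hmonic, hred⟩ := hG
  have hg0 : g ≠ 0 := by
    intro h
    have := hmonic g hg
    rw [h] at this
    simp at this
  have hμdeg : mdeg (lm m g) = g.totalDegree := mdeg_lm m hm hg0
  obtain ⟨i, hi⟩ : ∃ i, lm m g i ≠ 0 := by
    by_contra h
    push_neg at h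
    have : lm m g = 0 := Finsupp.ext fun i => h i
    rw [this, mdeg_zero] at hμdeg
    omega
  have hsingle : Finsupp.single i 1 ≤ lm m g :=
    Finsupp.single_le_iff.mpr (Nat.one_le_iff_ne_zero.mpr hi)
  have hνμ : (lm m g - Finsupp.single i 1) + Finsupp.single i 1 = lm m g :=
    tsub_add_cancel_of_le hsingle
  have hνdeg : mdeg (lm m g - Finsupp.single i 1) + 1 = mdeg (lm m g) := by
    conv_rhs => rw [← hνμ]
    rw [mdeg_add, mdeg_single]
  obtain ⟨q, hqI, hq0, hqlm⟩ := exists_lm_eq m hm F hreg.1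
    (show d ≤ mdeg (lm m g - Finsupp.single i 1) by omega)
  obtain ⟨g', hg', hg'0, hle⟩ := hGB q hqI hq0
  rw [hqlm] at hle
  rcases eq_or_ne g g' with rfl | hgg
  · have := mdeg_mono hle
    omega
  · refine hred g hg g' hg' hgg (lm m g) ?_ (hle.trans tsub_le_self)
    rw [MvPolynomial.mem_support_iff, hmonic g hg]
    exact one_ne_zero
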